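/- Let Γ ⊆ ℕ^n be the set of elements of a submonoid M of ℕ^n that are not expressible as a sum of two nonzero elements of M. If M contains d_1 e_1, ..., d_n e_n for some positive integers d_1,...,d_n (where e_i are standard basis vectors), then Γ is finite. -/

import Mathlib

/-- Let `M` be a submonoid of `ℕⁿ` and `Γ` the set of nonzero elements of `M` that are not
a sum of two nonzero elements of `M`.  If `M` contains positive multiples `d i • e i` of all
standard basis vectors, then `Γ` is finite. -/
theorem irreducibles_finite_of_basis_multiples {n : ℕ}
    (M : AddSubmonoid (Fin n → ℕ))
    (d : Fin n → ℕ) (hd : ∀ i, 0 < d i)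
    (hdM : ∀ i : Fin n, (fun j => if j = i then d i else 0) ∈ M) :
    {x : Fin n → ℕ | x ∈ M ∧ x ≠ 0 ∧
      ¬ ∃ a b : Fin n → ℕ, a ∈ M ∧ b ∈ M ∧ a ≠ 0 ∧ b ≠ 0 ∧ x = a + b}.Finite := by
  set ed : Fin n → (Fin n → ℕ) := fun i => (fun j => if j = i then d i else 0) with hed
  -- any vector whose coordinates are all divisible by the `d j` lies in `M`
  have hdvd_mem : ∀ v : Fin n → ℕ, (∀ j, d j ∣ v j) → v ∈ M := by
    intro v hv
    have hv' : v = ∑ j : Fin n, (v j / d j) • ed j := by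
      funext k
      have : (∑ j : Fin n, (v j / d j) • ed j) k
          = ∑ j : Fin n, (v j / d j) * (if k = j then d j else 0) := by
        rw [Finset.sum_apply]
        refine Finset.sum_congr rfl fun j _ => ?_
        simp [hed, eq_comm]
      rw [this]
      simp [mul_ite, Finset.sum_ite_eq, Nat.div_mul_cancel (hv k)]
    rw [hv']
    exact AddSubmonoid.sum_mem M fun j _ => AddSubmonoid.nsmul_mem M (hdM j) _
  -- the candidate superset
  set S : Set (Fin n → ℕ) :=
    {x | x ∈ M ∧ ∀ i, d i ≤ x i → x - ed i ∉ M} with hS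
  have hSfin : S.Finite := by
    -- partition by residues mod d
    have hR : ({r : Fin n → ℕ | ∀ i, r i < d i}).Finite := by
      have : {r : Fin n → ℕ | ∀ i, r i < d i} ⊆ Set.pi Set.univ (fun i => Set.Iio (d i)) := by
        intro r hr i _; exact hr i
      exact (Set.Finite.pi fun i => Set.finite_Iio (d i)).subset this
    have hsub : S ⊆ ⋃ r ∈ {r : Fin n → ℕ | ∀ i, r i < d i},
        {x ∈ S | ∀ i, x i % d i = r i} := by
      intro x hx
      exact Set.mem_biUnion (show (fun i => x i % d i) ∈ {r : Fin n → ℕ | ∀ i, r i < d i}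
        from fun i => Nat.mod_lt _ (hd i)) ⟨hx, fun i => rfl⟩
    refine Set.Finite.subset (Set.Finite.biUnion hR fun r _ => ?_) hsub
    -- each fiber is an antichain, hence finite by Dickson's lemma
    have hpwo : ({x ∈ S | ∀ i, x i % d i = r i} : Set (Fin n → ℕ)).IsPWO :=
      Set.isPWO_of_wellQuasiOrderedLE _
    refine IsAntichain.finite_of_partiallyWellOrderedOn (r := (· ≤ ·)) ?_ hpwo
    intro x hx y hy hne hle
    -- x ≤ y, x ≠ y, same residues: derive contradiction with y ∈ S
    obtain ⟨⟨hxM, _⟩, hxr⟩ := hx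
    obtain ⟨⟨hyM, hyS⟩, hyr⟩ := hy
    obtain ⟨i, hi⟩ : ∃ i, x i < y i := by
      by_contra h
      push_neg at h
      exact hne (funext fun j => le_antisymm (hle j) (h j))
    have hdvd : ∀ j, d j ∣ (y j - x j) := by
      intro j
      have h1 : x j % d j = y j % d j := (hxr j).trans (hyr j).symm
      exact Nat.dvd_of_mod_eq_zero (Nat.sub_mod_eq_zero_of_mod_eq h1.symm)
    have hdi : d i ≤ y i - x i :=
      Nat.le_of_dvd (by omega) (hdvd i)
    have hdiy : d i ≤ y i := by omega
    refine hyS i hdiy ?_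
    -- y - ed i = x + z where z has all coordinates divisible
    have hz : y - ed i = x + fun j => (y j - x j) - (if j = i then d i else 0) := by
      funext j
      simp only [Pi.sub_apply, Pi.add_apply, hed]
      have hj' : x j ≤ y j := hle j
      by_cases hj : j = i
      · subst hj; simp only [if_pos rfl, if_true]; omega
      · simp only [if_neg hj]; omega
    rw [hz]
    refine AddSubmonoid.add_mem M hxM (hdvd_mem _ fun j => ?_)
    by_cases hj : j = i
    · subst hj
      simp only [if_pos rfl]
      exact (Nat.dvd_sub (hdvd j) dvd_rfl)
    · simp only [if_neg hj]
      exact hdvd j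
  -- main inclusion
  have hUfin : (S ∪ ⋃ i, {ed i}).Finite :=
    hSfin.union (Set.finite_iUnion fun i => Set.finite_singleton _)
  refine hUfin.subset ?_
  rintro x ⟨hxM, hx0, hirr⟩
  by_cases hex : ∃ i, x = ed i
  · obtain ⟨i, rfl⟩ := hex
    exact Or.inr (Set.mem_iUnion.mpr ⟨i, rfl⟩)
  · push_neg at hex
    refine Or.inl ⟨hxM, fun i hdi hmem => ?_⟩
    refine hirr ⟨x - ed i, ed i, hmem, hdM i, ?_, ?_, ?_⟩
    · intro h0
      apply hex i
      funext j
      have := congrFun h0 j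
      simp only [Pi.sub_apply, Pi.zero_apply, hed] at this ⊢
      by_cases hj : j = i
      · subst hj; simp at this ⊢; omega
      · simp [hj] at this ⊢; omega
    · intro h0
      have := congrFun h0 i
      simp only [Pi.zero_apply, hed, if_pos rfl] at this
      have := hd i
      omega
    · funext j
      simp only [Pi.add_apply, Pi.sub_apply, hed]
      by_cases hj : j = i
      · subst hj; simp; omega
      · simp [hj]
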